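/- For any finite graph G with percolation measure, any vertex pair 0,b and set A of vertices, any edge e, and the family of graphs H_p obtained from G by setting the probability of edge e equal to p, the function f(p) := P_{H_p}(0↔b) − P_{H_p}(0↔A)·P_{H_p}(a↔b) is concave in p ∈ [0,1], for any fixed vertex a. Consequently, if f(0) ≥ 0 and f(1) ≥ 0, then f(p) ≥ 0 for all p ∈ [0,1]. -/

import Mathlib

open scoped BigOperators

structure PercGraph (V E : Type) where
  ends : E → V × V
  p : E → ℝ

namespace PercGraph

variable {V E : Type} [DecidableEq V] [Fintype E] [DecidableEq E]

/-- Weight of a configuration: each edge `e` is open (`ω e = true`) with probability `p e`. -/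
def weight (G : PercGraph V E) (ω : E → Bool) : ℝ :=
  ∏ e, if ω e then G.p e else 1 - G.p e

/-- Probability of an event under the percolation measure. -/
noncomputable def prob (G : PercGraph V E) (S : Set (E → Bool)) : ℝ :=
  ∑ ω : E → Bool, Set.indicator S G.weight ω

/-- Expectation of a function under the percolation measure. -/
noncomputable def expec (G : PercGraph V E) (f : (E → Bool) → ℝ) : ℝ :=
  ∑ ω : E → Bool, f ω * G.weight ω

/-- Two vertices are adjacent via an open edge in configuration `ω`. -/
def adj (G : PercGraph V E) (ω : E → Bool) (x y : V) : Prop :=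
  ∃ e, ω e = true ∧ (G.ends e = (x, y) ∨ G.ends e = (y, x))

/-- `x` and `y` are connected by a path of open edges. -/
def Conn (G : PercGraph V E) (ω : E → Bool) (x y : V) : Prop :=
  Relation.ReflTransGen (G.adj ω) x y

/-- The union of the open clusters of the vertices of `A`. -/
def cluster (G : PercGraph V E) (ω : E → Bool) (A : Set V) : Set V :=
  {y | ∃ a ∈ A, G.Conn ω a y}

/-- The event `x ↔ y`. -/
def connEvent (G : PercGraph V E) (x y : V) : Set (E → Bool) :=
  {ω | G.Conn ω x y}

/-- The event `x ↔ A`. -/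
def connTo (G : PercGraph V E) (x : V) (A : Set V) : Set (E → Bool) :=
  {ω | ∃ a ∈ A, G.Conn ω x a}

/-- The event `A ↮ B`. -/
def disconn (G : PercGraph V E) (A B : Set V) : Set (E → Bool) :=
  {ω | ∀ a ∈ A, ∀ b ∈ B, ¬ G.Conn ω a b}

def IncreasingEvent (S : Set (E → Bool)) : Prop :=
  ∀ ⦃ω ω' : E → Bool⦄, (∀ e, ω e = true → ω' e = true) → ω ∈ S → ω' ∈ S

def DecreasingEvent (S : Set (E → Bool)) : Prop :=
  ∀ ⦃ω ω' : E → Bool⦄, (∀ e, ω e = true → ω' e = true) → ω' ∈ S → ω ∈ S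

def IncreasingFun (f : (E → Bool) → ℝ) : Prop :=
  ∀ ⦃ω ω' : E → Bool⦄, (∀ e, ω e = true → ω' e = true) → f ω ≤ f ω'

/-- `f` is determined by the cluster of `A`. -/
def ClusterDetermined (G : PercGraph V E) (A : Set V) (f : (E → Bool) → ℝ) : Prop :=
  ∀ ω ω', G.cluster ω A = G.cluster ω' A → f ω = f ω'

/-- The event `S` is determined by the cluster of `A`. -/
def ClusterDeterminedEvent (G : PercGraph V E) (A : Set V) (S : Set (E → Bool)) : Prop :=
  ∀ ω ω', G.cluster ω A = G.cluster ω' A → (ω ∈ S ↔ ω' ∈ S)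

noncomputable def condProb (G : PercGraph V E) (S T : Set (E → Bool)) : ℝ :=
  G.prob (S ∩ T) / G.prob T

noncomputable def condExpec (G : PercGraph V E) (f : (E → Bool) → ℝ) (T : Set (E → Bool)) : ℝ :=
  G.expec (T.indicator f) / G.prob T

/-- The edge `e` is incident to the vertex `x`. -/
def incident (G : PercGraph V E) (x : V) (e : E) : Prop :=
  (G.ends e).1 = x ∨ (G.ends e).2 = x

/-- The other endpoint of an edge incident to `x`. -/
def otherEnd (G : PercGraph V E) (x : V) (e : E) : V :=
  if (G.ends e).1 = x then (G.ends e).2 else (G.ends e).1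

/-- The graph `G ∖ W`: delete the vertices of `W` and all incident edges. -/
def delete (G : PercGraph V E) (W : Finset V) :
    PercGraph V {e : E // (G.ends e).1 ∉ W ∧ (G.ends e).2 ∉ W} :=
  ⟨fun e => G.ends e.1, fun e => G.p e.1⟩

/-- The graph `G` with the probability of edge `e` replaced by `q`. -/
def withEdgeProb (G : PercGraph V E) (e : E) (q : ℝ) : PercGraph V E :=
  ⟨G.ends, Function.update G.p e q⟩

/-- Contraction of the edge `e`: set its probability to 1. -/
def contract (G : PercGraph V E) (e : E) : PercGraph V E :=
  G.withEdgeProb e 1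

/-- The event that `e` is pivotal for `U`. -/
def pivotal (e : E) (U : Set (E → Bool)) : Set (E → Bool) :=
  {ω | ¬ ((Function.update ω e true ∈ U) ↔ (Function.update ω e false ∈ U))}

/-- All edge probabilities lie in `[0,1]`. -/
def ProbValid (G : PercGraph V E) : Prop := ∀ e, 0 ≤ G.p e ∧ G.p e ≤ 1

end PercGraph

namespace EdgeAux
open PercGraph
variable {V E : Type} [DecidableEq V] [Fintype E] [DecidableEq E]

lemma weight_eq (G : PercGraph V E) (e : E) (r : ℝ) (ω : E → Bool) :
    (G.withEdgeProb e r).weight ω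
      = (if ω e then r else 1 - r) *
          ∏ e' ∈ Finset.univ.erase e, (if ω e' then G.p e' else 1 - G.p e') := by
  rw [PercGraph.weight, ← Finset.mul_prod_erase _ _ (Finset.mem_univ e)]
  congr 1
  · simp [PercGraph.withEdgeProb]
  · exact Finset.prod_congr rfl fun e' he' => by
      simp [PercGraph.withEdgeProb, Function.update_of_ne (Finset.ne_of_mem_erase he')]

lemma weight_affine (G : PercGraph V E) (e : E) (q : ℝ) (ω : E → Bool) :
    (G.withEdgeProb e q).weight ω
      = (1 - q) * (G.withEdgeProb e 0).weight ω + q * (G.withEdgeProb e 1).weight ω := by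
  rw [weight_eq, weight_eq, weight_eq]
  cases hωe : ω e <;> simp [hωe] <;> ring

lemma prob_affine (G : PercGraph V E) (e : E) (S : Set (E → Bool)) (q : ℝ) :
    (G.withEdgeProb e q).prob S
      = (1 - q) * (G.withEdgeProb e 0).prob S + q * (G.withEdgeProb e 1).prob S := by
  classical
  simp only [PercGraph.prob, Finset.mul_sum, ← Finset.sum_add_distrib]
  refine Finset.sum_congr rfl fun ω _ => ?_
  by_cases h : ω ∈ S
  · rw [Set.indicator_of_mem h, Set.indicator_of_mem h, Set.indicator_of_mem h]
    exact weight_affine G e q ω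
  · rw [Set.indicator_of_notMem h, Set.indicator_of_notMem h, Set.indicator_of_notMem h]
    ring

lemma prob_mono (G : PercGraph V E) (hp : G.ProbValid) (e : E) (S : Set (E → Bool))
    (hS : PercGraph.IncreasingEvent S) :
    (G.withEdgeProb e 0).prob S ≤ (G.withEdgeProb e 1).prob S := by
  classical
  have hinv : Function.Involutive (fun ω : E → Bool => Function.update ω e (!ω e)) := by
    intro ω
    simp [Function.update_idem, Function.update_eq_self]
  have hre : (G.withEdgeProb e 0).prob S
      = ∑ ω : E → Bool, Set.indicator S (G.withEdgeProb e 0).weight (Function.update ω e (!ω e)) := by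
    rw [PercGraph.prob]
    exact (Fintype.sum_bijective _ hinv.bijective _ _ fun ω => rfl).symm
  rw [hre, PercGraph.prob]
  refine Finset.sum_le_sum fun ω _ => ?_
  have hRnn : (0:ℝ) ≤ ∏ e' ∈ Finset.univ.erase e, (if ω e' then G.p e' else 1 - G.p e') := by
    refine Finset.prod_nonneg fun e' _ => ?_
    by_cases h : ω e' = true
    · simp [h, (hp e').1]
    · simp [h]; linarith [(hp e').2]
  cases hωe : ω e with
  | false =>
    simp only [Bool.not_false]
    have h0 : (G.withEdgeProb e 0).weight (Function.update ω e true) = 0 := by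
      rw [weight_eq]; simp
    have h1 : (G.withEdgeProb e 1).weight ω = 0 := by
      rw [weight_eq]; simp [hωe]
    by_cases hm : Function.update ω e true ∈ S
    · rw [Set.indicator_of_mem hm, h0]
      exact Set.indicator_apply_nonneg fun _ => h1.ge
    · rw [Set.indicator_of_notMem hm]
      exact Set.indicator_apply_nonneg fun _ => h1.ge
  | true =>
    simp only [Bool.not_true]
    have h0 : (G.withEdgeProb e 0).weight (Function.update ω e false)
        = ∏ e' ∈ Finset.univ.erase e, (if ω e' then G.p e' else 1 - G.p e') := by
      rw [weight_eq, Function.update_self]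
      have : ((if (false : Bool) then (0:ℝ) else 1 - 0)) = 1 := by norm_num
      rw [this, one_mul]
      exact Finset.prod_congr rfl fun e' he' => by
        rw [Function.update_of_ne (Finset.ne_of_mem_erase he')]
    have h1 : (G.withEdgeProb e 1).weight ω
        = ∏ e' ∈ Finset.univ.erase e, (if ω e' then G.p e' else 1 - G.p e') := by
      rw [weight_eq]; simp [hωe]
    by_cases hmem : Function.update ω e false ∈ S
    · have hmem' : ω ∈ S := by
        refine hS (fun e' he' => ?_) hmem
        by_cases h : e' = e
        · subst h; simp at he'
        · rwa [Function.update_of_ne h] at he'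
      rw [Set.indicator_of_mem hmem, Set.indicator_of_mem hmem', h0, h1]
    · rw [Set.indicator_of_notMem hmem]
      exact Set.indicator_apply_nonneg fun _ => h1 ▸ hRnn

end EdgeAux

namespace EdgeAux
open PercGraph
variable {V E : Type} [DecidableEq V] [Fintype E] [DecidableEq E]

omit [DecidableEq V] in
lemma conn_mono (G : PercGraph V E) {ω ω' : E → Bool} (h : ∀ e, ω e = true → ω' e = true)
    {x y : V} (hc : G.Conn ω x y) : G.Conn ω' x y :=
  Relation.ReflTransGen.mono (r := G.adj ω) (p := G.adj ω') (fun _ _ ⟨e, he, hends⟩ => ⟨e, h e he, hends⟩) _ _ hc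

omit [DecidableEq V] in
lemma incr_connEvent (G : PercGraph V E) (x y : V) :
    PercGraph.IncreasingEvent (G.connEvent x y) :=
  fun _ _ h hm => conn_mono G h hm

omit [DecidableEq V] in
lemma incr_connTo (G : PercGraph V E) (x : V) (A : Set V) :
    PercGraph.IncreasingEvent (G.connTo x A) :=
  fun _ _ h ⟨a, ha, hc⟩ => ⟨a, ha, conn_mono G h hc⟩

end EdgeAux


/-- the function
`f(q) = P_{H_q}(0↔b) − P_{H_q}(0↔A)·P_{H_q}(a↔b)`, where `H_q` sets the
probability of a fixed edge `e` to `q`, is concave on `[0,1]`; consequently if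
`f(0) ≥ 0` and `f(1) ≥ 0` then `f ≥ 0` on `[0,1]`. -/
theorem edge_prob_concave
    {V E : Type} [DecidableEq V] [Fintype E] [DecidableEq E]
    (G : PercGraph V E) (hp : G.ProbValid) (e : E) (x₀ b a : V) (A : Finset V) :
    let f : ℝ → ℝ := fun q =>
      (G.withEdgeProb e q).prob ((G.withEdgeProb e q).connEvent x₀ b) -
        (G.withEdgeProb e q).prob ((G.withEdgeProb e q).connTo x₀ ↑A) *
          (G.withEdgeProb e q).prob ((G.withEdgeProb e q).connEvent a b)
    ConcaveOn ℝ (Set.Icc (0 : ℝ) 1) f ∧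
      (0 ≤ f 0 → 0 ≤ f 1 → ∀ q ∈ Set.Icc (0 : ℝ) 1, 0 ≤ f q) := by
  intro f
  classical
  set P0 := (G.withEdgeProb e 0).prob (G.connEvent x₀ b) with hP0
  set P1 := (G.withEdgeProb e 1).prob (G.connEvent x₀ b) with hP1
  set A0 := (G.withEdgeProb e 0).prob (G.connTo x₀ ↑A) with hA0
  set A1 := (G.withEdgeProb e 1).prob (G.connTo x₀ ↑A) with hA1
  set B0 := (G.withEdgeProb e 0).prob (G.connEvent a b) with hB0
  set B1 := (G.withEdgeProb e 1).prob (G.connEvent a b) with hB1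
  have hf : ∀ q : ℝ, f q =
      ((1 - q) * P0 + q * P1) - ((1 - q) * A0 + q * A1) * ((1 - q) * B0 + q * B1) := by
    intro q
    show (G.withEdgeProb e q).prob (G.connEvent x₀ b) -
        (G.withEdgeProb e q).prob (G.connTo x₀ ↑A) *
          (G.withEdgeProb e q).prob (G.connEvent a b) = _
    rw [EdgeAux.prob_affine G e (G.connEvent x₀ b) q,
      EdgeAux.prob_affine G e (G.connTo x₀ ↑A) q,
      EdgeAux.prob_affine G e (G.connEvent a b) q]
  have hA : A0 ≤ A1 := EdgeAux.prob_mono G hp e _ (EdgeAux.incr_connTo G x₀ ↑A)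
  have hB : B0 ≤ B1 := EdgeAux.prob_mono G hp e _ (EdgeAux.incr_connEvent G a b)
  have hAd : (0:ℝ) ≤ A1 - A0 := by linarith
  have hBd : (0:ℝ) ≤ B1 - B0 := by linarith
  constructor
  · refine ⟨convex_Icc 0 1, ?_⟩
    intro x _ y _ α β hα hβ hαβ
    have hβ' : β = 1 - α := by linarith
    subst hβ'
    simp only [smul_eq_mul, hf]
    nlinarith [mul_nonneg (mul_nonneg (mul_nonneg (mul_nonneg hα hβ) hAd) hBd)
      (sq_nonneg (x - y))]
  · intro h0 h1 q hq
    obtain ⟨hq0, hq1⟩ := hq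
    rw [hf] at h0 h1 ⊢
    nlinarith [mul_nonneg (mul_nonneg (mul_nonneg hq0 (by linarith : (0:ℝ) ≤ 1 - q)) hAd) hBd,
      mul_nonneg (by linarith : (0:ℝ) ≤ 1 - q) h0, mul_nonneg hq0 h1]
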